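/- arXiv:2307.15871 — 6 statements merged into one kernel-verified Lean document; each statement's English description precedes it below -/
import Mathlib

section
/- Let p, q ∈ (0,1) be real numbers with p + q = 1, let s ≥ p be a real number, let x > 0 be real, and let d_1, …, d_n and t_1, …, t_n be nonnegative reals with d_i ≤ x for every i. Then ∑_{i=1}^n d_i^s · t_i^q ≤ x^{s−p} · (∑_{i=1}^n d_i)^p · (∑_{i=1}^n t_i)^q. -/
/-- For `p, q ∈ (0,1)` with `p + q = 1`, `s ≥ p`, `x > 0`, and nonnegative
reals `d i ≤ x`, `t i`, one has
`∑ i, d i ^ s * t i ^ q ≤ x ^ (s - p) * (∑ i, d i) ^ p * (∑ i, t i) ^ q`. -/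
theorem sum_rpow_le_of_le (p q : ℝ) (hp : 0 < p) (hp1 : p < 1) (hq : 0 < q) (hq1 : q < 1)
    (hpq : p + q = 1) (s : ℝ) (hs : p ≤ s) (x : ℝ) (hx : 0 < x)
    (n : ℕ) (d t : Fin n → ℝ)
    (hd : ∀ i, 0 ≤ d i) (ht : ∀ i, 0 ≤ t i) (hdx : ∀ i, d i ≤ x) :
    ∑ i, d i ^ s * t i ^ q ≤ x ^ (s - p) * (∑ i, d i) ^ p * (∑ i, t i) ^ q := by
  have hconj : Real.HolderConjugate (1 / p) (1 / q) := by
    constructor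
    · simp only [one_div, inv_inv, inv_one]
      exact hpq
    · positivity
    · positivity
  have hholder : ∑ i, d i ^ p * t i ^ q ≤ (∑ i, d i) ^ p * (∑ i, t i) ^ q := by
    have h := Real.inner_le_Lp_mul_Lq Finset.univ (fun i => d i ^ p) (fun i => t i ^ q) hconj
    simp only [one_div_one_div] at h
    refine h.trans_eq ?_
    congr 1
    · congr 1
      apply Finset.sum_congr rfl
      intro i _
      rw [abs_of_nonneg (Real.rpow_nonneg (hd i) p), ← Real.rpow_mul (hd i),
        mul_one_div_cancel hp.ne', Real.rpow_one]
    · congr 1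
      apply Finset.sum_congr rfl
      intro i _
      rw [abs_of_nonneg (Real.rpow_nonneg (ht i) q), ← Real.rpow_mul (ht i),
        mul_one_div_cancel hq.ne', Real.rpow_one]
  calc ∑ i, d i ^ s * t i ^ q ≤ ∑ i, x ^ (s - p) * (d i ^ p * t i ^ q) := by
        apply Finset.sum_le_sum
        intro i _
        have : d i ^ s = d i ^ (s - p) * d i ^ p := by
          rw [← Real.rpow_add' (hd i) (by rw [sub_add_cancel]; exact (hp.trans_le hs).ne'),
            sub_add_cancel]
        rw [this, mul_assoc]
        exact mul_le_mul_of_nonneg_right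
          (Real.rpow_le_rpow (hd i) (hdx i) (by linarith))
          (mul_nonneg (Real.rpow_nonneg (hd i) p) (Real.rpow_nonneg (ht i) q))
    _ = x ^ (s - p) * ∑ i, d i ^ p * t i ^ q := by rw [Finset.mul_sum]
    _ ≤ x ^ (s - p) * ((∑ i, d i) ^ p * (∑ i, t i) ^ q) := by
        gcongr
    _ = x ^ (s - p) * (∑ i, d i) ^ p * (∑ i, t i) ^ q := by ring
end

section
/- For all integers 1 ≤ ℓ ≤ k there exists a constant C > 0 (depending only on k and ℓ) such that every finite simple graph G satisfies Δ_k^ℓ ≤ C · Δ_ℓ^k, where Δ_k and Δ_ℓ are the numbers of k-cliques and ℓ-cliques of G; that is, the number of k-cliques in a graph with Δ_ℓ ℓ-cliques is O(Δ_ℓ^{k/ℓ}). -/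
open Finset
open scoped FinsetFamily

theorem clique_nat (k ℓ : ℕ) (hℓ : 1 ≤ ℓ) (hk : ℓ ≤ k)
    (V : Type) [Fintype V] [DecidableEq V] (G : SimpleGraph V) [DecidableRel G.Adj] :
    #(G.cliqueFinset k) ^ ℓ ≤
      (2 * ℓ) ^ (k * ℓ) * (Nat.factorial ℓ) ^ k * #(G.cliqueFinset ℓ) ^ k := by
  set Δk := #(G.cliqueFinset k) with hΔk
  set Δℓ := #(G.cliqueFinset ℓ) with hΔℓ
  rcases Nat.eq_zero_or_pos Δk with h0 | hpos
  · rw [h0, Nat.zero_pow (by omega)]; exact Nat.zero_le _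
  have hk1 : 1 ≤ k := hℓ.trans hk
  -- there is a k-clique
  obtain ⟨S, hS⟩ := Finset.card_pos.1 hpos
  have hSclique := (SimpleGraph.mem_cliqueFinset_iff.1 hS)
  -- Δℓ ≥ 1
  have hΔℓpos : 1 ≤ Δℓ := by
    obtain ⟨T, hTS, hTcard⟩ := Finset.exists_subset_card_eq (hSclique.2 ▸ hk : ℓ ≤ #S)
    refine Finset.card_pos.2 ⟨T, SimpleGraph.mem_cliqueFinset_iff.2 ⟨hSclique.1.subset hTS, hTcard⟩⟩
  -- ground set size
  set n := Fintype.card V with hn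
  have hkn : k ≤ n := by
    calc k = #S := hSclique.2.symm
    _ ≤ n := Finset.card_le_univ S
  set e : V ≃ Fin n := Fintype.equivFin V with he
  set em : Finset V ↪ Finset (Fin n) := ⟨Finset.map e.toEmbedding, Finset.map_injective _⟩
  set 𝒜 : Finset (Finset (Fin n)) := (G.cliqueFinset k).map em with h𝒜
  have h𝒜card : #𝒜 = Δk := Finset.card_map _
  have h𝒜sized : (𝒜 : Set (Finset (Fin n))).Sized k := by
    intro A hA
    simp only [h𝒜, Finset.coe_map, Set.mem_image, Finset.mem_coe] at hA
    obtain ⟨S', hS', rfl⟩ := hA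
    simp [em, (SimpleGraph.mem_cliqueFinset_iff.1 hS').2]
  -- shadow bound (for an arbitrary DecidableEq instance on Fin n)
  have hshadow : ∀ (inst : DecidableEq (Fin n)),
      #((@Finset.shadow (Fin n) inst)^[k - ℓ] 𝒜) ≤ Δℓ := by
    intro inst
    have hsub : (@Finset.shadow (Fin n) inst)^[k - ℓ] 𝒜 ⊆ (G.cliqueFinset ℓ).map em := by
      intro B hB
      rw [@Finset.mem_shadow_iterate_iff_exists_sdiff (Fin n) inst] at hB
      obtain ⟨A, hA, hBA, hABcard⟩ := hB
      obtain ⟨S', hS', rfl⟩ := Finset.mem_map.1 hA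
      obtain ⟨T, hTS, rfl⟩ := Finset.subset_map_iff.1 hBA
      have hS'c := SimpleGraph.mem_cliqueFinset_iff.1 hS'
      have hTcard : #T = ℓ := by
        have h1 : #(Finset.map e.toEmbedding T) = #T := Finset.card_map _
        have h2 : #(Finset.map e.toEmbedding S') = #S' := Finset.card_map _
        have h3 : Finset.map e.toEmbedding T ⊆ Finset.map e.toEmbedding S' := hBA
        have h4 : #(Finset.map e.toEmbedding S') - #(Finset.map e.toEmbedding T) = k - ℓ := by
          rw [← Finset.card_sdiff_of_subset h3]; exact hABcard
        have hTS' : #T ≤ #S' := Finset.card_le_card hTS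
        have hS'card : #S' = k := hS'c.2
        omega
      exact Finset.mem_map.2 ⟨T, SimpleGraph.mem_cliqueFinset_iff.2
        ⟨hS'c.1.subset hTS, hTcard⟩, rfl⟩
    calc #((@Finset.shadow (Fin n) inst)^[k - ℓ] 𝒜) ≤ #((G.cliqueFinset ℓ).map em) :=
          Finset.card_le_card hsub
    _ = Δℓ := Finset.card_map _
  -- the threshold t
  set P : ℕ → Prop := fun s => Nat.choose s k ≤ Δk with hP
  have hPk : P k := by simpa [hP, Nat.choose_self] using Nat.one_le_iff_ne_zero.2 hpos.ne'
  set t := Nat.findGreatest P n with ht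
  have htk : k ≤ t := Nat.le_findGreatest hkn hPk
  have htn : t ≤ n := Nat.findGreatest_le n
  have htP : P t := Nat.findGreatest_spec hkn hPk
  have hnotP : ¬ P (t + 1) := by
    rcases lt_or_ge t n with h | h
    · exact Nat.findGreatest_is_greatest (Nat.lt_succ_self t) h
    · -- t = n; choose (n+1) k > choose n k ≥ Δk
      intro hcon
      have hΔkn : Δk ≤ Nat.choose n k := SimpleGraph.card_cliqueFinset_le
      obtain ⟨k', rfl⟩ : ∃ k', k = k' + 1 := ⟨k - 1, by omega⟩
      have hlt : Nat.choose n (k' + 1) < Nat.choose (n + 1) (k' + 1) := by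
        rw [Nat.choose_succ_succ']
        have : 0 < Nat.choose n k' := Nat.choose_pos (by omega)
        omega
      have : t + 1 = n + 1 := by omega
      rw [this] at hcon
      simp only [hP] at hcon
      omega
  have hΔklt : Δk < Nat.choose (t + 1) k := by
    simpa [hP] using Nat.not_le.1 hnotP
  -- Kruskal-Katona
  have hKK : Nat.choose t ℓ ≤ Δℓ := by
    have h := Finset.kruskal_katona_lovasz_form (i := k - ℓ) (r := k) (k := t) (n := n)
      (by omega) htk htn h𝒜sized (h𝒜card ▸ htP)
    have hrw : k - (k - ℓ) = ℓ := by omega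
    rw [hrw] at h
    exact h.trans (hshadow _)
  -- upper bound on Δk
  have hub : Δk ≤ (t + 1) ^ k := by
    calc Δk ≤ Nat.choose (t + 1) k := hΔklt.le
    _ ≤ (t + 1).descFactorial k := by
        rw [Nat.descFactorial_eq_factorial_mul_choose]
        exact Nat.le_mul_of_pos_left _ (Nat.factorial_pos k)
    _ ≤ (t + 1) ^ k := Nat.descFactorial_le_pow _ _
  rcases lt_or_ge (t + 1) (2 * ℓ) with hcase | hcase
  · -- small t: Δk ≤ (2ℓ)^k
    calc Δk ^ ℓ ≤ ((2 * ℓ) ^ k) ^ ℓ := by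
          exact Nat.pow_le_pow_left (hub.trans (Nat.pow_le_pow_left (by omega) k)) ℓ
    _ = (2 * ℓ) ^ (k * ℓ) := by rw [← pow_mul]
    _ ≤ (2 * ℓ) ^ (k * ℓ) * (Nat.factorial ℓ) ^ k * Δℓ ^ k := by
        have h1 : 1 ≤ (Nat.factorial ℓ) ^ k := Nat.one_le_pow _ _ (Nat.factorial_pos ℓ)
        have h2 : 1 ≤ Δℓ ^ k := Nat.one_le_pow _ _ hΔℓpos
        calc (2 * ℓ) ^ (k * ℓ) = (2 * ℓ) ^ (k * ℓ) * 1 * 1 := by ring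
        _ ≤ (2 * ℓ) ^ (k * ℓ) * (Nat.factorial ℓ) ^ k * Δℓ ^ k := by
            exact Nat.mul_le_mul (Nat.mul_le_mul_left _ h1) h2
  · -- main case: (t+1)^ℓ ≤ 2^ℓ * ℓ! * Δℓ
    have hkey : (t + 1) ^ ℓ ≤ 2 ^ ℓ * Nat.factorial ℓ * Δℓ := by
      have hdesc : (t + 1 - ℓ) ^ ℓ ≤ Nat.factorial ℓ * Nat.choose t ℓ := by
        rw [← Nat.descFactorial_eq_factorial_mul_choose]
        exact Nat.pow_sub_le_descFactorial t ℓ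
      have hhalf : t + 1 ≤ 2 * (t + 1 - ℓ) := by omega
      calc (t + 1) ^ ℓ ≤ (2 * (t + 1 - ℓ)) ^ ℓ := Nat.pow_le_pow_left hhalf ℓ
      _ = 2 ^ ℓ * (t + 1 - ℓ) ^ ℓ := by rw [mul_pow]
      _ ≤ 2 ^ ℓ * (Nat.factorial ℓ * Nat.choose t ℓ) := Nat.mul_le_mul_left _ hdesc
      _ ≤ 2 ^ ℓ * (Nat.factorial ℓ * Δℓ) := by
          exact Nat.mul_le_mul_left _ (Nat.mul_le_mul_left _ hKK)
      _ = 2 ^ ℓ * Nat.factorial ℓ * Δℓ := by ring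
    calc Δk ^ ℓ ≤ ((t + 1) ^ k) ^ ℓ := Nat.pow_le_pow_left hub ℓ
    _ = ((t + 1) ^ ℓ) ^ k := by rw [← pow_mul, ← pow_mul, Nat.mul_comm]
    _ ≤ (2 ^ ℓ * Nat.factorial ℓ * Δℓ) ^ k := Nat.pow_le_pow_left hkey k
    _ = (2 ^ ℓ) ^ k * (Nat.factorial ℓ) ^ k * Δℓ ^ k := by rw [mul_pow, mul_pow]
    _ ≤ (2 * ℓ) ^ (k * ℓ) * (Nat.factorial ℓ) ^ k * Δℓ ^ k := by
        have : (2:ℕ) ^ ℓ ≤ (2 * ℓ) ^ ℓ := Nat.pow_le_pow_left (by omega) ℓ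
        have h2 : ((2:ℕ) ^ ℓ) ^ k ≤ ((2 * ℓ) ^ ℓ) ^ k := Nat.pow_le_pow_left this k
        have h3 : ((2 * ℓ) ^ ℓ) ^ k = (2 * ℓ) ^ (k * ℓ) := by
          rw [← pow_mul, Nat.mul_comm ℓ k]
        exact Nat.mul_le_mul (Nat.mul_le_mul_right _ (h3 ▸ h2)) le_rfl


/-- For `1 ≤ ℓ ≤ k` there is a constant `C > 0` (depending only on `k, ℓ`) such that
every finite simple graph satisfies `Δ_k ^ ℓ ≤ C * Δ_ℓ ^ k`, i.e. the number of
`k`-cliques is `O(Δ_ℓ^{k/ℓ})`. -/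
theorem cliqueCount_pow_le (k ℓ : ℕ) (hℓ : 1 ≤ ℓ) (hk : ℓ ≤ k) :
    ∃ C : ℝ, 0 < C ∧
      ∀ (V : Type) [Fintype V] [DecidableEq V] (G : SimpleGraph V) [DecidableRel G.Adj],
        ((G.cliqueFinset k).card : ℝ) ^ ℓ ≤ C * ((G.cliqueFinset ℓ).card : ℝ) ^ k := by
  refine ⟨(((2 * ℓ) ^ (k * ℓ) * (Nat.factorial ℓ) ^ k : ℕ) : ℝ), ?_, ?_⟩
  · have h : 0 < (2 * ℓ) ^ (k * ℓ) * (Nat.factorial ℓ) ^ k := by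
      have := Nat.factorial_pos ℓ
      positivity
    exact_mod_cast h
  · intro V _ _ G _
    exact_mod_cast clique_nat k ℓ hℓ hk V G
end

section
/- Let p be a prime, k ≥ 2 an integer, V a finite set with a map part : V → {1,…,k}, w : V × V → F_p a function, x ∈ F_p with x ≠ 0, and y : V × {1,…,k} → F_p such that for every v ∈ V, ∑_{j ≠ part(v)} y(v, j) = 0. For nodes a, b with part(a) = i ≠ j = part(b), define w'(a, b) = x·w(a, b) + y(a, j) + y(b, i). Then for every transversal (v_1, …, v_k) (i.e., part(v_i) = i for all i), one has ∑_{1 ≤ i < j ≤ k} w'(v_i, v_j) = 0 if and only if ∑_{1 ≤ i < j ≤ k} w(v_i, v_j) = 0. In particular, the set of exact (zero-weight) k-cliques with respect to w' equals that with respect to w whenever x ≠ 0. -/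
/-- Hashing preserves exact `k`-cliques: with `w'(a,b) = x * w(a,b) + y(a, part b) + y(b, part a)`,
`x ≠ 0`, and each node's auxiliary values summing to zero, a transversal has
zero total `w'`-weight iff it has zero total `w`-weight. -/
theorem hashed_weight_zero_iff (p : ℕ) [Fact p.Prime] (k : ℕ) (hk : 2 ≤ k)
    (V : Type*) [Fintype V] (part : V → Fin k)
    (w : V → V → ZMod p) (x : ZMod p) (hx : x ≠ 0)
    (y : V → Fin k → ZMod p)
    (hy : ∀ v : V, ∑ j ∈ Finset.univ.filter (fun j => j ≠ part v), y v j = 0)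
    (v : Fin k → V) (hv : ∀ i, part (v i) = i) :
    (∑ q ∈ Finset.univ.filter (fun q : Fin k × Fin k => q.1 < q.2),
        (x * w (v q.1) (v q.2) + y (v q.1) (part (v q.2)) + y (v q.2) (part (v q.1))) = 0)
      ↔ (∑ q ∈ Finset.univ.filter (fun q : Fin k × Fin k => q.1 < q.2),
          w (v q.1) (v q.2) = 0) := by
  simp only [hv]
  have hswap : ∑ q ∈ Finset.univ.filter (fun q : Fin k × Fin k => q.1 < q.2), y (v q.2) q.1
      = ∑ q ∈ Finset.univ.filter (fun q : Fin k × Fin k => q.2 < q.1), y (v q.1) q.2 := by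
    apply Finset.sum_nbij' (fun q => (q.2, q.1)) (fun q => (q.2, q.1)) <;> simp
  have hzero : ∑ q ∈ Finset.univ.filter (fun q : Fin k × Fin k => q.1 < q.2),
      (y (v q.1) q.2 + y (v q.2) q.1) = 0 := by
    rw [Finset.sum_add_distrib, hswap, ← Finset.sum_union]
    · have : (Finset.univ.filter (fun q : Fin k × Fin k => q.1 < q.2) ∪
          Finset.univ.filter (fun q : Fin k × Fin k => q.2 < q.1))
          = Finset.univ.filter (fun q : Fin k × Fin k => q.2 ≠ q.1) := by
        ext q
        simp [lt_or_lt_iff_ne, ne_comm, or_comm]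
      rw [this]
      rw [Finset.sum_filter]
      rw [Fintype.sum_prod_type]
      have : ∀ i : Fin k, (∑ j : Fin k, if j ≠ i then y (v i) j else 0) = 0 := by
        intro i
        rw [← Finset.sum_filter]
        have := hy (v i)
        rw [hv i] at this
        exact this
      simp only [ne_eq, ite_not] at this
      refine Finset.sum_eq_zero fun i _ => ?_
      simpa using this i
    · rw [Finset.disjoint_filter]
      intro q _ h1 h2
      exact absurd h1 (not_lt.2 h2.le)
  have hsum : ∑ q ∈ Finset.univ.filter (fun q : Fin k × Fin k => q.1 < q.2),
      (x * w (v q.1) (v q.2) + y (v q.1) q.2 + y (v q.2) q.1)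
      = x * ∑ q ∈ Finset.univ.filter (fun q : Fin k × Fin k => q.1 < q.2), w (v q.1) (v q.2) := by
    simp only [add_assoc, Finset.sum_add_distrib, hzero, add_zero, Finset.mul_sum]
  rw [hsum]
  constructor
  · intro h
    rcases mul_eq_zero.1 h with h | h
    · exact absurd h hx
    · exact h
  · intro h; rw [h, mul_zero]
end

section
/- Let p be a prime, k ≥ 3 an integer, V a finite set with a map part : V → {1,…,k}, and w : V × V → F_p a symmetric function. Consider the probability space in which: x is uniform on F_p; independently, for every node v ∈ V, the tuple (y_{v,j})_{j ∈ {1,…,k} \ {part(v)}} is uniform among tuples in F_p^{k−1} satisfying ∑_{j ≠ part(v)} y_{v,j} = 0; and all these random objects are mutually independent. For nodes a, b with part(a) = i ≠ j = part(b), define the random variable w'(a, b) = x·w(a, b) + y_{a,j} + y_{b,i}. Let (u_1, …, u_k) be a transversal with ∑_{1 ≤ i < j ≤ k} w(u_i, u_j) = 0, let (v_1, …, v_k) be a transversal with ∑_{1 ≤ i < j ≤ k} w(v_i, v_j) ≠ 0, and let S = {i : u_i = v_i}. Then the family of random variables w'(u_i, u_j) − w'(v_i, v_j), indexed by the pairs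 1 ≤ i < j ≤ k such that not both i ∈ S and j ∈ S, is mutually independent. -/
open MeasureTheory ProbabilityTheory

namespace CliqueListingLB

variable (p k : ℕ) [Fact p.Prime] (V : Type) [Fintype V] [DecidableEq V] (part : V → Fin k)

/-- Zero-sum tuples of auxiliary values for a node `a`: functions `Fin k → ZMod p`
whose values over `j ≠ part a` sum to `0`.  (The coordinate `part a` itself is unused
by the hashed weights, so tuples here model tuples in `F_p^{k-1}` of sum zero.) -/
def ZeroSumTuple (a : V) : Type :=
  {f : Fin k → ZMod p // ∑ j ∈ Finset.univ.filter (fun j => j ≠ part a), f j = 0}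

instance (a : V) : Fintype (ZeroSumTuple p k V part a) := by
  unfold ZeroSumTuple; infer_instance

instance (a : V) : Nonempty (ZeroSumTuple p k V part a) :=
  ⟨⟨0, by simp⟩⟩

/-- The sample space: a uniform `x ∈ F_p` together with, independently for each node `a`,
a uniform zero-sum tuple of auxiliary values.  The product of uniform distributions on
finite sets is the uniform distribution on the (finite) product, so the uniform measure
on `Ω` is exactly the joint distribution described. -/
def Ω : Type := ZMod p × (∀ a : V, ZeroSumTuple p k V part a)

instance : Fintype (Ω p k V part) := by unfold Ω; infer_instance

instance : Nonempty (Ω p k V part) := by unfold Ω; infer_instance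

instance : MeasurableSpace (Ω p k V part) := ⊤

/-- The uniform probability measure on the sample space. -/
noncomputable def μ : Measure (Ω p k V part) :=
  (PMF.uniformOfFintype (Ω p k V part)).toMeasure

/-- The hashed weight `w'(a, b) = x * w(a, b) + y_{a, part b} + y_{b, part a}` as a random
variable of the sample point `ω = (x, y)`. -/
def hashedWeight (w : V → V → ZMod p) (ω : Ω p k V part) (a b : V) : ZMod p :=
  ω.1 * w a b + (ω.2 a).1 (part b) + (ω.2 b).1 (part a)


/-! ### Auxiliary machinery -/

open Finset in
private lemma sum_pairs_aux {k : ℕ} {M : Type*} [AddCommGroup M] (z : Fin k → Fin k → M)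
    (hdiag : ∀ i, z i i = 0) :
    ∑ i, ∑ j, z i j
      = ∑ q ∈ Finset.univ.filter (fun q : Fin k × Fin k => q.1 < q.2),
          (z q.1 q.2 + z q.2 q.1) := by
  classical
  rw [← Finset.sum_product', Finset.univ_product_univ]
  rw [← Finset.sum_filter_add_sum_filter_not Finset.univ
    (fun q : Fin k × Fin k => q.1 < q.2) (fun q => z q.1 q.2)]
  rw [Finset.sum_add_distrib]
  congr 1
  have hsub : Finset.univ.filter (fun q : Fin k × Fin k => q.2 < q.1)
      ⊆ Finset.univ.filter (fun q : Fin k × Fin k => ¬ q.1 < q.2) := by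
    intro q hq
    simp only [Finset.mem_filter, Finset.mem_univ, true_and] at hq ⊢
    exact not_lt_of_gt hq
  rw [← Finset.sum_subset hsub ?zero]
  case zero =>
    intro q hq hq2
    simp only [Finset.mem_filter, Finset.mem_univ, true_and, not_lt] at hq hq2
    have : q.1 = q.2 := le_antisymm hq2 hq
    rw [← this, hdiag]
  · apply Finset.sum_nbij' (fun q => (q.2, q.1)) (fun q => (q.2, q.1))
    · intro q hq; simp only [Finset.mem_filter, Finset.mem_univ, true_and] at hq ⊢; exact hq
    · intro q hq; simp only [Finset.mem_filter, Finset.mem_univ, true_and] at hq ⊢; exact hq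
    · intro q _; rfl
    · intro q _; rfl
    · intro q _; rfl

private lemma exists_z_aux {k : ℕ} {M : Type*} [AddCommGroup M]
    (S : Fin k → Prop) [DecidablePred S] (t₀ : Fin k) (ht₀ : ¬ S t₀)
    (D : Fin k → Fin k → M)
    (hsym : ∀ i j, D i j = D j i)
    (hSS : ∀ i j, S i → S j → D i j = 0)
    (hsum : ∑ q ∈ Finset.univ.filter (fun q : Fin k × Fin k => q.1 < q.2), D q.1 q.2 = 0) :
    ∃ z : Fin k → Fin k → M,
      (∀ i j, S i → z i j = 0) ∧
      (∀ i, ∑ j ∈ Finset.univ.filter (fun j => j ≠ i), z i j = 0) ∧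
      (∀ i j, i ≠ j → z i j + z j i = D i j) := by
  classical
  set base : Fin k → Fin k → M := fun i j =>
    if S j then D i j else if i < j then D i j else 0 with hbase
  set ρ : Fin k → M := fun i =>
    -(∑ j ∈ Finset.univ.filter (fun j => j ≠ i ∧ j ≠ t₀), base i j) with hρ
  set z : Fin k → Fin k → M := fun i j =>
    if S i then 0
    else if S j then D i j
    else if i = t₀ then (if j = t₀ then 0 else D t₀ j - ρ j)
    else if j = t₀ then ρ i
    else if i < j then D i j else 0 with hz
  have hzS : ∀ i j, S i → z i j = 0 := fun i j hSi => by simp [hz, hSi]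
  have ev1 : ∀ i j, ¬ S i → S j → z i j = D i j := fun i j h1 h2 => by
    simp [hz, h1, h2]
  have ev2 : ∀ j, ¬ S j → j ≠ t₀ → z t₀ j = D t₀ j - ρ j := fun j h1 h2 => by
    simp [hz, ht₀, h1, h2]
  have ev3 : ∀ i, ¬ S i → i ≠ t₀ → z i t₀ = ρ i := fun i h1 h2 => by
    simp [hz, ht₀, h1, h2]
  have ev4 : ∀ i j, ¬ S i → ¬ S j → i ≠ t₀ → j ≠ t₀ → i < j → z i j = D i j :=
    fun i j h1 h2 h3 h4 h5 => by simp [hz, h1, h2, h3, h4, h5]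
  have ev5 : ∀ i j, ¬ S i → ¬ S j → i ≠ t₀ → j ≠ t₀ → ¬ i < j → z i j = 0 :=
    fun i j h1 h2 h3 h4 h5 => by simp [hz, h1, h2, h3, h4, h5]
  have hdiagz : ∀ i, z i i = 0 := by
    intro i
    by_cases hSi : S i
    · exact hzS i i hSi
    · by_cases hit : i = t₀
      · rw [hit]; simp [hz, ht₀]
      · exact ev5 i i hSi hSi hit hit (lt_irrefl i)
  have hpair : ∀ i j, i ≠ j → z i j + z j i = D i j := by
    intro i j hij
    by_cases hSi : S i
    · by_cases hSj : S j
      · rw [hzS i j hSi, hzS j i hSj, hSS i j hSi hSj, add_zero]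
      · rw [hzS i j hSi, ev1 j i hSj hSi, hsym j i, zero_add]
    · by_cases hSj : S j
      · rw [ev1 i j hSi hSj, hzS j i hSj, add_zero]
      · by_cases hit : i = t₀
        · have hjt : j ≠ t₀ := fun h => hij (hit.trans h.symm)
          rw [hit] at hSi ⊢
          rw [ev2 j hSj hjt, ev3 j hSj hjt, sub_add_cancel]
        · by_cases hjt : j = t₀
          · rw [hjt] at hSj ⊢
            rw [ev3 i hSi hit, ev2 i hSi hit, hsym i t₀]
            abel
          · rcases lt_or_gt_of_ne hij with h | h
            · rw [ev4 i j hSi hSj hit hjt h, ev5 j i hSj hSi hjt hit (not_lt_of_gt h), add_zero]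
            · rw [ev5 i j hSi hSj hit hjt (not_lt_of_gt h), ev4 j i hSj hSi hjt hit h,
                hsym j i, zero_add]
  have hrow' : ∀ i, i ≠ t₀ → ∑ j ∈ Finset.univ.filter (fun j => j ≠ i), z i j = 0 := by
    intro i hit
    by_cases hSi : S i
    · exact Finset.sum_eq_zero fun j _ => hzS i j hSi
    · have hsplit : Finset.univ.filter (fun j => j ≠ i)
          = insert t₀ (Finset.univ.filter (fun j => j ≠ i ∧ j ≠ t₀)) := by
        ext j
        simp only [Finset.mem_filter, Finset.mem_univ, true_and, Finset.mem_insert]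
        constructor
        · intro hj
          by_cases hjt : j = t₀
          · exact Or.inl hjt
          · exact Or.inr ⟨hj, hjt⟩
        · rintro (rfl | ⟨hj, _⟩)
          · exact Ne.symm hit
          · exact hj
      rw [hsplit, Finset.sum_insert (by simp)]
      have h2 : ∀ j ∈ Finset.univ.filter (fun j => j ≠ i ∧ j ≠ t₀), z i j = base i j := by
        intro j hj
        simp only [Finset.mem_filter, Finset.mem_univ, true_and] at hj
        by_cases hSj : S j
        · rw [ev1 i j hSi hSj, hbase]; simp [hSj]
        · by_cases hlt : i < j
          · rw [ev4 i j hSi hSj hit hj.2 hlt, hbase]; simp [hSj, hlt]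
          · rw [ev5 i j hSi hSj hit hj.2 hlt, hbase]; simp [hSj, hlt]
      rw [Finset.sum_congr rfl h2, ev3 i hSi hit, hρ]
      simp
  refine ⟨z, hzS, ?_, hpair⟩
  intro i
  by_cases hit : i = t₀
  · rw [hit]
    have hT : ∑ i, ∑ j, z i j = 0 := by
      rw [sum_pairs_aux z hdiagz]
      rw [Finset.sum_congr rfl (fun q hq => ?_)]
      · exact hsum
      · have : q.1 < q.2 := by simpa using hq
        exact hpair q.1 q.2 (ne_of_lt this)
    have hfull : ∀ i : Fin k, ∑ j ∈ Finset.univ.filter (fun j => j ≠ i), z i j = ∑ j, z i j := by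
      intro i
      apply Finset.sum_subset (Finset.filter_subset _ _)
      intro j _ hj
      simp only [Finset.mem_filter, Finset.mem_univ, true_and, not_not] at hj
      rw [hj, hdiagz]
    rw [hfull]
    have hone : ∑ i, ∑ j, z i j = ∑ j, z t₀ j := by
      apply Finset.sum_eq_single_of_mem t₀ (Finset.mem_univ _)
      intro i _ hi
      rw [← hfull i]
      exact hrow' i hi
    rw [← hone, hT]
  · exact hrow' i hit

private lemma nat_card_preimage_aux {A B : Type*} [AddCommGroup A] [AddCommGroup B]
    (f : A →+ B) (hf : Function.Surjective f) (E : Set B) :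
    Nat.card (f ⁻¹' E) = Nat.card E * Nat.card (f ⁻¹' ({0} : Set B)) := by
  obtain ⟨g, hg⟩ := hf.hasRightInverse
  have e : (f ⁻¹' E) ≃ E × (f ⁻¹' ({0} : Set B)) :=
  { toFun := fun a => (⟨f a.1, a.2⟩, ⟨a.1 - g (f a.1), by
      simp [Set.mem_preimage, map_sub, hg (f a.1)]⟩)
    invFun := fun be => ⟨g be.1.1 + be.2.1, by
      have h2 : f be.2.1 = 0 := be.2.2
      have : f (g be.1.1 + be.2.1) = be.1.1 := by simp [map_add, hg be.1.1, h2]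
      simpa [Set.mem_preimage, this] using be.1.2⟩
    left_inv := fun a => by
      apply Subtype.ext
      simp
    right_inv := fun be => by
      have h2 : f be.2.1 = 0 := be.2.2
      have hfb : f (g be.1.1 + be.2.1) = be.1.1 := by simp [map_add, hg be.1.1, h2]
      ext
      · simp [hfb]
      · simp [hfb] }
  rw [Nat.card_congr e, Nat.card_prod]

private lemma nat_card_preimage_mul_aux {A B : Type*} [AddCommGroup A] [AddCommGroup B]
    (f : A →+ B) (hf : Function.Surjective f) (E : Set B) :
    Nat.card (f ⁻¹' E) * Nat.card B = Nat.card E * Nat.card A := by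
  have h1 := nat_card_preimage_aux f hf E
  have h2 := nat_card_preimage_aux f hf Set.univ
  rw [Set.preimage_univ] at h2
  simp only [Nat.card_univ] at h2
  rw [h1, h2]
  ring

open scoped ENNReal in
private lemma uniform_meas_preimage_aux {A B : Type*} [Fintype A] [Nonempty A] [AddCommGroup A]
    [AddCommGroup B] [MeasurableSpace A]
    (f : A →+ B) (hf : Function.Surjective f) (E : Set B)
    (hpre : MeasurableSet (f ⁻¹' E)) :
    (PMF.uniformOfFintype A).toMeasure (f ⁻¹' E)
      = (Nat.card E : ℝ≥0∞) / (Nat.card B : ℝ≥0∞) := by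
  classical
  have hBfin : Finite B := Finite.of_surjective f hf
  have hBne : Nonempty B := ⟨f (Classical.arbitrary A)⟩
  rw [PMF.toMeasure_uniformOfFintype_apply _ hpre]
  have hA0 : (Fintype.card A : ℝ≥0∞) ≠ 0 := by
    simp [Fintype.card_ne_zero]
  have hB0 : (Nat.card B : ℝ≥0∞) ≠ 0 := by
    simp [Nat.card_pos.ne']
  rw [ENNReal.div_eq_div_iff hB0 (by simp) hA0 (by simp)]
  have hnat : Nat.card B * Fintype.card ↥(f ⁻¹' E) = Fintype.card A * Nat.card ↥E := by
    rw [← Nat.card_eq_fintype_card, ← Nat.card_eq_fintype_card, mul_comm, mul_comm (Nat.card A)]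
    exact nat_card_preimage_mul_aux f hf E
  exact_mod_cast hnat

open scoped ENNReal in
private lemma iIndepFun_of_joint_surjective_aux {A B : Type*} [Fintype A] [Nonempty A]
    [AddCommGroup A] [MeasurableSpace A] (hmeas : ∀ s : Set A, MeasurableSet s)
    [Fintype B] [Nonempty B] [AddCommGroup B] {ι : Type*}
    (D : ι → (A →+ B))
    (hsurj : ∀ (S : Finset ι) (c : ι → B), ∃ a, ∀ q ∈ S, D q a = c q) :
    iIndepFun (m := fun _ => (⊤ : MeasurableSpace B)) (fun q a => D q a)
      (PMF.uniformOfFintype A).toMeasure := by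
  classical
  rw [iIndepFun_iff_measure_inter_preimage_eq_mul]
  intro S sets _
  let G : A →+ (S → B) :=
  { toFun := fun a q => D q a
    map_zero' := by ext q; simp
    map_add' := by intro a b; ext q; simp }
  have hGsurj : Function.Surjective G := by
    intro g
    obtain ⟨a, ha⟩ := hsurj S (fun q => if h : q ∈ S then g ⟨q, h⟩ else 0)
    refine ⟨a, funext fun q => ?_⟩
    have := ha q q.2
    simpa [G, dif_pos q.2] using this
  have hset : (⋂ q ∈ S, (fun a => D q a) ⁻¹' sets q)
      = G ⁻¹' (Set.univ.pi fun q : S => sets q.1) := by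
    ext a
    simp only [Set.mem_iInter, Set.mem_preimage, Set.mem_pi, Set.mem_univ, forall_true_left]
    constructor
    · intro h q; exact h q.1 q.2
    · intro h q hq; exact h ⟨q, hq⟩
  rw [hset, uniform_meas_preimage_aux G hGsurj _ (hmeas _)]
  have hsingle : ∀ q ∈ S, (PMF.uniformOfFintype A).toMeasure ((fun a => D q a) ⁻¹' sets q)
      = (Nat.card (sets q) : ℝ≥0∞) / (Nat.card B : ℝ≥0∞) := by
    intro q _
    refine uniform_meas_preimage_aux (D q) ?_ _ (hmeas _)
    intro b
    obtain ⟨a, ha⟩ := hsurj {q} (fun _ => b)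
    exact ⟨a, ha q (Finset.mem_singleton_self q)⟩
  rw [Finset.prod_congr rfl hsingle]
  have hpi : Nat.card ↥(Set.univ.pi fun q : S => sets q.1)
      = ∏ q : S, Nat.card (sets q.1) := by
    rw [Nat.card_congr (Equiv.Set.univPi _), Nat.card_pi]
  rw [hpi, Nat.card_fun, Nat.card_eq_fintype_card (α := ↥S), Fintype.card_coe,
    ← Finset.prod_coe_sort S (fun x => (Nat.card ↥(sets x) : ℝ≥0∞) / (Nat.card B : ℝ≥0∞))]
  push_cast
  simp only [div_eq_mul_inv, Finset.prod_mul_distrib, Finset.prod_const, ENNReal.inv_pow,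
    Finset.card_univ, Fintype.card_coe]

/-! ### Group structure on the sample space -/

private def zeroSumSubgroup (a : V) : AddSubgroup (Fin k → ZMod p) where
  carrier := {f | ∑ j ∈ Finset.univ.filter (fun j => j ≠ part a), f j = 0}
  add_mem' := by
    intro f g hf hg
    simp only [Set.mem_setOf_eq, Pi.add_apply] at *
    rw [Finset.sum_add_distrib, hf, hg, add_zero]
  zero_mem' := by simp
  neg_mem' := by
    intro f hf
    simp only [Set.mem_setOf_eq, Pi.neg_apply] at *
    rw [Finset.sum_neg_distrib, hf, neg_zero]

instance (a : V) : AddCommGroup (ZeroSumTuple p k V part a) :=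
  inferInstanceAs (AddCommGroup (zeroSumSubgroup p k V part a))

instance : AddCommGroup (Ω p k V part) :=
  inferInstanceAs (AddCommGroup (ZMod p × ∀ a : V, ZeroSumTuple p k V part a))

private lemma omega_add_fst (ω ω' : Ω p k V part) : (ω + ω').1 = ω.1 + ω'.1 := rfl

private lemma omega_add_snd (ω ω' : Ω p k V part) (a : V) (j : Fin k) :
    ((ω + ω').2 a).1 j = (ω.2 a).1 j + (ω'.2 a).1 j := rfl

private lemma omega_zero_fst : (0 : Ω p k V part).1 = 0 := rfl

private lemma omega_zero_snd (a : V) (j : Fin k) : ((0 : Ω p k V part).2 a).1 j = 0 := rfl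

/-- The hashed-weight difference as an additive group homomorphism on the sample space. -/
private def Dhom (w : V → V → ZMod p) (u v : Fin k → V) (q : Fin k × Fin k) :
    Ω p k V part →+ ZMod p where
  toFun ω := hashedWeight p k V part w ω (u q.1) (u q.2)
      - hashedWeight p k V part w ω (v q.1) (v q.2)
  map_zero' := by
    simp only [hashedWeight, omega_zero_fst, omega_zero_snd]
    ring
  map_add' := by
    intro ω ω'
    simp only [hashedWeight, omega_add_fst, omega_add_snd]
    ring

/-! ### Joint surjectivity -/

private lemma joint_surjective (w : V → V → ZMod p) (hw : ∀ a b, w a b = w b a)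
    (u v : Fin k → V) (hu : ∀ i, part (u i) = i) (hv : ∀ i, part (v i) = i)
    (hu0 : ∑ q ∈ Finset.univ.filter (fun q : Fin k × Fin k => q.1 < q.2),
      w (u q.1) (u q.2) = 0)
    (hv0 : ∑ q ∈ Finset.univ.filter (fun q : Fin k × Fin k => q.1 < q.2),
      w (v q.1) (v q.2) ≠ 0)
    (c : {q : Fin k × Fin k // q.1 < q.2 ∧ ¬(u q.1 = v q.1 ∧ u q.2 = v q.2)} → ZMod p) :
    ∃ ω : Ω p k V part, ∀ q, Dhom p k V part w u v q.1 ω = c q := by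
  classical
  have hne : ∃ i, u i ≠ v i := by
    by_contra h
    push_neg at h
    apply hv0
    rw [← hu0]
    exact Finset.sum_congr rfl fun q _ => by rw [h q.1, h q.2]
  obtain ⟨t₀, ht₀⟩ := hne
  set σv : ZMod p := ∑ q ∈ Finset.univ.filter (fun q : Fin k × Fin k => q.1 < q.2),
    w (v q.1) (v q.2) with hσv
  set x : ZMod p := -(∑ qq, c qq) * σv⁻¹ with hx
  set cext : Fin k × Fin k → ZMod p := fun q =>
    if h : q.1 < q.2 ∧ ¬(u q.1 = v q.1 ∧ u q.2 = v q.2) then c ⟨q, h⟩ else 0 with hcext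
  set D : Fin k → Fin k → ZMod p := fun i j =>
    if i = j ∨ (u i = v i ∧ u j = v j) then 0
    else (if i < j then cext (i, j) else cext (j, i)) - x * (w (u i) (u j) - w (v i) (v j))
    with hD
  have hsym : ∀ i j, D i j = D j i := by
    intro i j
    rcases lt_trichotomy i j with h | h | h
    · rw [hD]
      simp only
      rw [if_pos h, if_neg (not_lt_of_gt h), hw (u i) (u j), hw (v i) (v j)]
      by_cases hb : u i = v i ∧ u j = v j
      · rw [if_pos (Or.inr hb), if_pos (Or.inr ⟨hb.2, hb.1⟩)]
      · rw [if_neg ?l, if_neg ?r]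
        case l => rintro (h' | h'); exact ne_of_lt h h'; exact hb h'
        case r => rintro (h' | h'); exact ne_of_gt h h'; exact hb ⟨h'.2, h'.1⟩
    · rw [h]
    · rw [hD]
      simp only
      rw [if_pos h, if_neg (not_lt_of_gt h), hw (u i) (u j), hw (v i) (v j)]
      by_cases hb : u i = v i ∧ u j = v j
      · rw [if_pos (Or.inr hb), if_pos (Or.inr ⟨hb.2, hb.1⟩)]
      · rw [if_neg ?l, if_neg ?r]
        case l => rintro (h' | h'); exact ne_of_gt h h'; exact hb h'
        case r => rintro (h' | h'); exact ne_of_lt h h'; exact hb ⟨h'.2, h'.1⟩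
  have hSS : ∀ i j, u i = v i → u j = v j → D i j = 0 := by
    intro i j h1 h2
    rw [hD]
    simp only
    rw [if_pos (Or.inr ⟨h1, h2⟩)]
  have hDlt : ∀ i j, i < j →
      D i j = cext (i, j) - x * (w (u i) (u j) - w (v i) (v j)) := by
    intro i j hij
    rw [hD]
    simp only
    by_cases hb : u i = v i ∧ u j = v j
    · rw [if_pos (Or.inr hb)]
      have h1 : cext (i, j) = 0 := by
        rw [hcext]
        exact dif_neg (fun hcond => hcond.2 hb)
      rw [h1, hb.1, hb.2]
      ring
    · rw [if_neg ?c, if_pos hij]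
      case c => rintro (h' | h'); exact ne_of_lt hij h'; exact hb h'
  have hsum : ∑ q ∈ Finset.univ.filter (fun q : Fin k × Fin k => q.1 < q.2),
      D q.1 q.2 = 0 := by
    rw [Finset.sum_congr rfl (fun q hq => hDlt q.1 q.2 (by simpa using hq))]
    rw [Finset.sum_sub_distrib, ← Finset.mul_sum, Finset.sum_sub_distrib, hu0, zero_sub,
      ← hσv]
    have h1 : ∑ q ∈ Finset.univ.filter (fun q : Fin k × Fin k => q.1 < q.2), cext (q.1, q.2)
        = ∑ qq : {q : Fin k × Fin k // q.1 < q.2 ∧ ¬(u q.1 = v q.1 ∧ u q.2 = v q.2)},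
            c qq := by
      have hQsub : Finset.univ.filter
            (fun q : Fin k × Fin k => q.1 < q.2 ∧ ¬(u q.1 = v q.1 ∧ u q.2 = v q.2))
          ⊆ Finset.univ.filter (fun q : Fin k × Fin k => q.1 < q.2) := by
        intro q hq
        simp only [Finset.mem_filter, Finset.mem_univ, true_and] at hq ⊢
        exact hq.1
      rw [Finset.sum_congr rfl (fun q (_ : q ∈ _) => by rw [Prod.mk.eta])]
      rw [← Finset.sum_subset hQsub ?van]
      case van =>
        intro q hq hq2
        simp only [Finset.mem_filter, Finset.mem_univ, true_and] at hq hq2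
        refine dif_neg ?_
        intro hcond
        exact hq2 ⟨hq, hcond.2⟩
      rw [Finset.sum_subtype (p := fun q : Fin k × Fin k =>
          q.1 < q.2 ∧ ¬(u q.1 = v q.1 ∧ u q.2 = v q.2)) _ (fun q => by simp) cext]
      apply Finset.sum_congr rfl
      intro qq _
      show cext qq.1 = c qq
      exact dif_pos qq.2
    rw [h1]
    have hxσ : x * -σv
        = ∑ qq : {q : Fin k × Fin k // q.1 < q.2 ∧ ¬(u q.1 = v q.1 ∧ u q.2 = v q.2)},
            c qq := by
      rw [hx]
      set s := ∑ qq : {q : Fin k × Fin k // q.1 < q.2 ∧ ¬(u q.1 = v q.1 ∧ u q.2 = v q.2)},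
        c qq with hs
      have hrearr : -s * σv⁻¹ * -σv = s * (σv⁻¹ * σv) := by ring
      rw [hrearr, inv_mul_cancel₀ hv0, mul_one]
    rw [hxσ, sub_self]
  obtain ⟨z, hz1, hz2, hz3⟩ :=
    exists_z_aux (fun i => u i = v i) t₀ ht₀ D hsym hSS hsum
  set y : ∀ a : V, ZeroSumTuple p k V part a := fun a =>
    if h : u (part a) = a ∧ u (part a) ≠ v (part a)
    then ⟨z (part a), hz2 (part a)⟩ else 0 with hy
  have hyu : ∀ (i : Fin k) (j : Fin k), (y (u i)).1 j = z i j := by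
    intro i j
    rw [hy]
    simp only
    by_cases h : u i = v i
    · erw [dif_neg]
      · rw [hz1 i j h]
        rfl
      · rw [hu i]
        rintro ⟨_, h2⟩
        exact h2 h
    · erw [dif_pos ⟨by rw [hu i], by rw [hu i]; exact h⟩]
      show z (part (u i)) j = z i j
      rw [hu i]
  have hyv : ∀ (i : Fin k) (j : Fin k), (y (v i)).1 j = 0 := by
    intro i j
    rw [hy]
    simp only
    erw [dif_neg]
    · rfl
    · rw [hv i]
      rintro ⟨h1, h2⟩
      exact h2 h1
  refine ⟨(x, y), ?_⟩
  rintro ⟨⟨i, j⟩, hlt, hnb⟩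
  have e1 : z i j + z j i = D i j := hz3 i j (ne_of_lt hlt)
  rw [hDlt i j hlt] at e1
  have e2 : cext (i, j) = c ⟨(i, j), ⟨hlt, hnb⟩⟩ := dif_pos ⟨hlt, hnb⟩
  rw [e2] at e1
  show x * w (u i) (u j) + (y (u i)).1 (part (u j)) + (y (u j)).1 (part (u i))
      - (x * w (v i) (v j) + (y (v i)).1 (part (v j)) + (y (v j)).1 (part (v i)))
      = c ⟨(i, j), ⟨hlt, hnb⟩⟩
  rw [hyu i (part (u j)), hyu j (part (u i)), hyv i (part (v j)), hyv j (part (v i)),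
    hu i, hu j]
  linear_combination e1

private lemma main_proof (w : V → V → ZMod p) (hw : ∀ a b, w a b = w b a)
    (u v : Fin k → V) (hu : ∀ i, part (u i) = i) (hv : ∀ i, part (v i) = i)
    (hu0 : ∑ q ∈ Finset.univ.filter (fun q : Fin k × Fin k => q.1 < q.2),
      w (u q.1) (u q.2) = 0)
    (hv0 : ∑ q ∈ Finset.univ.filter (fun q : Fin k × Fin k => q.1 < q.2),
      w (v q.1) (v q.2) ≠ 0) :
    iIndepFun (m := fun _ => (⊤ : MeasurableSpace (ZMod p)))
      (fun (q : {q : Fin k × Fin k // q.1 < q.2 ∧ ¬(u q.1 = v q.1 ∧ u q.2 = v q.2)})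
           (ω : Ω p k V part) =>
        hashedWeight p k V part w ω (u q.1.1) (u q.1.2)
          - hashedWeight p k V part w ω (v q.1.1) (v q.1.2))
      (μ p k V part) := by
  classical
  have hmeas : ∀ s : Set (Ω p k V part), MeasurableSet s := fun s => trivial
  have key := iIndepFun_of_joint_surjective_aux (A := Ω p k V part) (B := ZMod p) hmeas
      (D := fun q : {q : Fin k × Fin k // q.1 < q.2 ∧ ¬(u q.1 = v q.1 ∧ u q.2 = v q.2)} =>
        Dhom p k V part w u v q.1)
      (fun S c => by
        obtain ⟨ω, hω⟩ := joint_surjective p k V part w hw u v hu hv hu0 hv0 c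
        exact ⟨ω, fun q _ => hω q⟩)
  exact key

/-- Lemma (independence of the hashed-weight differences): if `(u_1, …, u_k)` is a
transversal of total `w`-weight `0` and `(v_1, …, v_k)` is a transversal of nonzero
total `w`-weight, then the random variables `w'(u_i, u_j) − w'(v_i, v_j)`, over the
pairs `i < j` such that not both `u_i = v_i` and `u_j = v_j`, are mutually
independent. -/
theorem iIndepFun_hashedWeight_sub (hk : 3 ≤ k)
    (w : V → V → ZMod p) (hw : ∀ a b, w a b = w b a)
    (u v : Fin k → V) (hu : ∀ i, part (u i) = i) (hv : ∀ i, part (v i) = i)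
    (hu0 : ∑ q ∈ Finset.univ.filter (fun q : Fin k × Fin k => q.1 < q.2),
      w (u q.1) (u q.2) = 0)
    (hv0 : ∑ q ∈ Finset.univ.filter (fun q : Fin k × Fin k => q.1 < q.2),
      w (v q.1) (v q.2) ≠ 0) :
    iIndepFun (m := fun _ => (⊤ : MeasurableSpace (ZMod p)))
      (fun (q : {q : Fin k × Fin k // q.1 < q.2 ∧ ¬(u q.1 = v q.1 ∧ u q.2 = v q.2)})
           (ω : Ω p k V part) =>
        hashedWeight p k V part w ω (u q.1.1) (u q.1.2)
          - hashedWeight p k V part w ω (v q.1.1) (v q.1.2))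
      (μ p k V part) := by
  classical
  exact main_proof p k V part w hw u v hu hv hu0 hv0

end CliqueListingLB
end

section
/- Fix a real ω with 2 ≤ ω ≤ 3. Then for every integer k ≥ 2, one has k·(ω − 2) ≤ α_k. -/
/-- `x_k = k * ∏_{j=2}^{k} ((5-2j)+(j-2)ω)`. -/
noncomputable def xk (ω : ℝ) (k : ℕ) : ℝ :=
  (k : ℝ) * ∏ j ∈ Finset.Icc 2 k, ((5 - 2 * (j : ℝ)) + ((j : ℝ) - 2) * ω)

/-- `y_k = (3-ω)^{k-2} + ∑_{j=2}^{k-1} (3-ω)^{k-1-j} x_j`. -/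
noncomputable def yk (ω : ℝ) (k : ℕ) : ℝ :=
  (3 - ω) ^ (k - 2) + ∑ j ∈ Finset.Icc 2 (k - 1), (3 - ω) ^ (k - 1 - j) * xk ω j

/-- `α_k = x_k / y_k`. -/
noncomputable def alphak (ω : ℝ) (k : ℕ) : ℝ := xk ω k / yk ω k

lemma xk_pos (ω : ℝ) (hω2 : 2 ≤ ω) (k : ℕ) (hk : 1 ≤ k) : 0 < xk ω k := by
  unfold xk
  apply mul_pos (by exact_mod_cast hk)
  apply Finset.prod_pos
  intro j hj
  have hj2 : (2:ℝ) ≤ (j:ℝ) := by exact_mod_cast (Finset.mem_Icc.mp hj).1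
  nlinarith

lemma yk_two (ω : ℝ) : yk ω 2 = 1 := by
  simp [yk]

lemma xk_two (ω : ℝ) : xk ω 2 = 2 := by
  simp [xk]
  norm_num

lemma yk_succ (ω : ℝ) (k : ℕ) (hk : 2 ≤ k) :
    yk ω (k + 1) = (3 - ω) * yk ω k + xk ω k := by
  obtain ⟨m, rfl⟩ : ∃ m, k = m + 1 := ⟨k - 1, by omega⟩
  unfold yk
  have h1 : m + 1 + 1 - 2 = (m + 1 - 2) + 1 := by omega
  have h2 : m + 1 + 1 - 1 = m + 1 := by omega
  have hm : m + 1 - 1 = m := by omega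
  rw [h1, h2, hm, Finset.sum_Icc_succ_top (by omega : 2 ≤ m + 1)]
  have hsum : ∑ j ∈ Finset.Icc 2 m, (3 - ω) ^ (m + 1 - j) * xk ω j
      = (3 - ω) * ∑ j ∈ Finset.Icc 2 m, (3 - ω) ^ (m - j) * xk ω j := by
    rw [Finset.mul_sum]
    refine Finset.sum_congr rfl fun j hj => ?_
    have hjk : j ≤ m := (Finset.mem_Icc.mp hj).2
    have hje : m + 1 - j = (m - j) + 1 := by omega
    rw [hje, pow_succ]; ring
  rw [hsum, Nat.sub_self, pow_zero, pow_succ]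
  ring

lemma xk_succ (ω : ℝ) (k : ℕ) (hk : 2 ≤ k) :
    xk ω (k + 1) = ((k : ℝ) + 1) / k * ((3 - 2 * k) + ((k : ℝ) - 1) * ω) * xk ω k := by
  have hk0 : (k : ℝ) ≠ 0 := by positivity
  unfold xk
  rw [Finset.prod_Icc_succ_top (by omega : 2 ≤ k + 1)]
  push_cast
  generalize (∏ j ∈ Finset.Icc 2 k, ((5 - 2 * (j : ℝ)) + ((j : ℝ) - 2) * ω)) = P
  field_simp
  ring

lemma yk_pos (ω : ℝ) (hω2 : 2 ≤ ω) (hω3 : ω ≤ 3) :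
    ∀ k, 2 ≤ k → 0 < yk ω k := by
  intro k hk
  induction k, hk using Nat.le_induction with
  | base => rw [yk_two]; norm_num
  | succ k hk ih =>
    rw [yk_succ ω k hk]
    have hx := xk_pos ω hω2 k (by omega)
    have h3 : (0:ℝ) ≤ 3 - ω := by linarith
    nlinarith

lemma key (ω : ℝ) (hω2 : 2 ≤ ω) (hω3 : ω ≤ 3) :
    ∀ k : ℕ, 2 ≤ k → (k : ℝ) * (ω - 2) * yk ω k ≤ xk ω k := by
  intro k hk
  induction k, hk using Nat.le_induction with
  | base => rw [yk_two, xk_two]; push_cast; linarith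
  | succ k hk ih =>
    have hx := xk_pos ω hω2 k (by omega)
    have hy := yk_pos ω hω2 hω3 k hk
    have h3 : (0:ℝ) ≤ 3 - ω := by linarith
    have hk1 : (1:ℝ) ≤ (k:ℝ) := by exact_mod_cast Nat.one_le_of_lt hk
    rw [yk_succ ω k hk, xk_succ ω k hk]
    have hk0 : (0:ℝ) < (k:ℝ) := by linarith
    rw [← sub_nonneg]
    have hdiv : ((k : ℝ) + 1) / k * ((3 - 2 * k) + ((k : ℝ) - 1) * ω) * xk ω k
        - ((k : ℝ) + 1) * (ω - 2) * ((3 - ω) * yk ω k + xk ω k)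
        = (((k:ℝ)+1) * (3-ω) / k) * (xk ω k - (k : ℝ) * (ω - 2) * yk ω k) := by
      field_simp
      ring
    push_cast
    rw [hdiv]
    have hih : 0 ≤ xk ω k - (k : ℝ) * (ω - 2) * yk ω k := by linarith
    have hcoef : 0 ≤ ((k:ℝ)+1) * (3-ω) / k := by positivity
    exact mul_nonneg hcoef hih

/-- For `2 ≤ ω ≤ 3` and every `k ≥ 2`: `k(ω - 2) ≤ α_k`. -/
theorem alphak_lower_bound (ω : ℝ) (hω2 : 2 ≤ ω) (hω3 : ω ≤ 3) (k : ℕ) (hk : 2 ≤ k) :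
    (k : ℝ) * (ω - 2) ≤ alphak ω k := by
  have hy := yk_pos ω hω2 hω3 k hk
  have hkey := key ω hω2 hω3 k hk
  rw [alphak, le_div_iff₀ hy]
  exact hkey
end

section
/- Let ρ = log 2 / log(3/2) (i.e., ρ = log_{3/2} 2). Then for every real p with 0 ≤ p ≤ 1/3, one has (2/3 − 2p)^ρ + (2/3 + p)^ρ ≤ 1. -/
open Real Set

private lemma rho_pow_two_thirds :
    ((2:ℝ) / 3) ^ (Real.log 2 / Real.log (3 / 2)) = 1 / 2 := by
  have h32 : (0:ℝ) < 3 / 2 := by norm_num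
  have hlog : Real.log (3 / 2) ≠ 0 := by
    have : (1:ℝ) < 3 / 2 := by norm_num
    exact ne_of_gt (Real.log_pos this)
  rw [Real.rpow_def_of_pos (by norm_num : (0:ℝ) < 2 / 3)]
  have hl : Real.log (2 / 3) = -Real.log (3 / 2) := by
    rw [show (2/3:ℝ) = (3/2:ℝ)⁻¹ by norm_num, Real.log_inv]
  rw [hl, show -Real.log (3 / 2) * (Real.log 2 / Real.log (3 / 2)) = -Real.log 2 by
    field_simp]
  rw [Real.exp_neg, Real.exp_log (by norm_num : (0:ℝ) < 2)]
  norm_num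

private lemma rho_ge_one : 1 ≤ Real.log 2 / Real.log (3 / 2) := by
  have h1 : (0:ℝ) < Real.log (3 / 2) := Real.log_pos (by norm_num)
  rw [le_div_iff₀ h1, one_mul]
  exact Real.log_le_log (by norm_num) (by norm_num)

/-- For `ρ = log 2 / log(3/2)` (i.e. `ρ = log_{3/2} 2`) and every `0 ≤ p ≤ 1/3`:
`(2/3 - 2p)^ρ + (2/3 + p)^ρ ≤ 1`, where powers are real powers (rpow). -/
theorem rpow_key_inequality (p : ℝ) (hp0 : 0 ≤ p) (hp1 : p ≤ 1 / 3) :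
    (2 / 3 - 2 * p) ^ (Real.log 2 / Real.log (3 / 2))
      + (2 / 3 + p) ^ (Real.log 2 / Real.log (3 / 2)) ≤ 1 := by
  set ρ := Real.log 2 / Real.log (3 / 2) with hρ
  have hconv : ConvexOn ℝ (Ici 0) fun x : ℝ ↦ x ^ ρ := convexOn_rpow rho_ge_one
  have ht0 : (0:ℝ) ≤ 3 * p := by linarith
  have ht1 : (0:ℝ) ≤ 1 - 3 * p := by linarith
  -- first term: 2/3 - 2p = (1 - 3p) • (2/3) + (3p) • 0
  have h1 := hconv.2 (by norm_num : (2/3:ℝ) ∈ Ici (0:ℝ)) (by norm_num : (0:ℝ) ∈ Ici (0:ℝ))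
    ht1 ht0 (by ring)
  have h2 := hconv.2 (by norm_num : (2/3:ℝ) ∈ Ici (0:ℝ)) (by norm_num : (1:ℝ) ∈ Ici (0:ℝ))
    ht1 ht0 (by ring)
  simp only [smul_eq_mul] at h1 h2
  have e1 : (1 - 3 * p) * (2/3 : ℝ) + 3 * p * 0 = 2 / 3 - 2 * p := by ring
  have e2 : (1 - 3 * p) * (2/3 : ℝ) + 3 * p * 1 = 2 / 3 + p := by ring
  rw [e1] at h1
  rw [e2] at h2
  have hz : (0:ℝ) ^ ρ = 0 := by
    apply Real.zero_rpow
    have := rho_ge_one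
    linarith
  have ho : (1:ℝ) ^ ρ = 1 := Real.one_rpow ρ
  have hv : ((2:ℝ)/3) ^ ρ = 1 / 2 := rho_pow_two_thirds
  rw [hz, hv] at h1
  rw [ho, hv] at h2
  linarith
end
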